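/- Let G be a finite 2-connected graph in which some vertex w belongs to a 2-separator. Then the closed neighborhood N[w] does not induce a complete graph in G. -/

import Mathlib

open SimpleGraph
open scoped Classical

theorem stmt10 {V : Type*} [Fintype V] (G : SimpleGraph V) (hconn : G.Connected)
    (hcard : 3 ≤ Fintype.card V)
    (hnocut : ∀ v : V, (G.induce {u | u ≠ v}).Connected)
    (w w' : V) (hne : w ≠ w')
    (hsep : ¬ (G.induce {x | x ≠ w ∧ x ≠ w'}).Connected) :
    ¬ ∀ x ∈ insert w (G.neighborSet w), ∀ y ∈ insert w (G.neighborSet w),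
        x ≠ y → G.Adj x y := by
  intro hclique
  apply hsep
  -- key: any walk in G - w' between vertices ≠ w can be rerouted to avoid w
  have key : ∀ n : ℕ, ∀ a b : ↥{u : V | u ≠ w'}, ∀ ha : a.1 ≠ w, ∀ hb : b.1 ≠ w,
      ∀ p : (G.induce {u : V | u ≠ w'}).Walk a b, p.length ≤ n →
      (G.induce {x : V | x ≠ w ∧ x ≠ w'}).Reachable ⟨a.1, ha, a.2⟩ ⟨b.1, hb, b.2⟩ := by
    intro n
    induction n with
    | zero =>
      intro a b ha hb p hp
      cases p with
      | nil => exact Reachable.refl _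
      | cons h q => simp [SimpleGraph.Walk.length_cons] at hp
    | succ n ih =>
      intro a b ha hb p hp
      cases p with
      | nil => exact Reachable.refl _
      | @cons _ c _ h q =>
        by_cases hc : c.1 = w
        · -- the walk goes through w; shortcut around it
          cases q with
          | nil => exact absurd hc hb
          | @cons _ d _ h2 r =>
            have haw : G.Adj w a.1 := by
              have : G.Adj a.1 c.1 := h
              rw [hc] at this
              exact this.symm
            have hdw : G.Adj w d.1 := by
              have : G.Adj c.1 d.1 := h2
              rwa [hc] at this
            have hdne : d.1 ≠ w := fun he => G.loopless.irrefl w (he ▸ hdw)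
            have hrest := ih d b hdne hb r (by
              simp [SimpleGraph.Walk.length_cons] at hp; omega)
            by_cases had : a.1 = d.1
            · have : (⟨a.1, ha, a.2⟩ : ↥{x : V | x ≠ w ∧ x ≠ w'}) = ⟨d.1, hdne, d.2⟩ :=
                Subtype.ext had
              rw [this]
              exact hrest
            · have hadj : G.Adj a.1 d.1 :=
                hclique a.1 (Set.mem_insert_iff.2 (Or.inr haw)) d.1
                  (Set.mem_insert_iff.2 (Or.inr hdw)) had
              have : (G.induce {x : V | x ≠ w ∧ x ≠ w'}).Adj ⟨a.1, ha, a.2⟩ ⟨d.1, hdne, d.2⟩ :=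
                hadj
              exact (this.reachable).trans hrest
        · have hadj : (G.induce {x : V | x ≠ w ∧ x ≠ w'}).Adj ⟨a.1, ha, a.2⟩ ⟨c.1, hc, c.2⟩ :=
            (h : G.Adj a.1 c.1)
          have hrest := ih c b hc hb q (by
            simp [SimpleGraph.Walk.length_cons] at hp; omega)
          exact (hadj.reachable).trans hrest
  rw [SimpleGraph.connected_iff]
  constructor
  · -- preconnected
    rintro ⟨x, hxw, hxw'⟩ ⟨y, hyw, hyw'⟩
    have hr : (G.induce {u : V | u ≠ w'}).Reachable ⟨x, hxw'⟩ ⟨y, hyw'⟩ :=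
      (hnocut w').preconnected _ _
    obtain ⟨p⟩ := hr
    exact key p.length ⟨x, hxw'⟩ ⟨y, hyw'⟩ hxw hyw p le_rfl
  · -- nonempty
    have : ∃ u : V, u ≠ w ∧ u ≠ w' := by
      by_contra hcon
      push_neg at hcon
      have hsub : (Finset.univ : Finset V) ⊆ {w, w'} := by
        intro u _
        by_cases hu : u = w
        · simp [hu]
        · simp [hcon u hu]
      have h1 := Finset.card_le_card hsub
      have h2 : ({w, w'} : Finset V).card ≤ 2 :=
        (Finset.card_insert_le _ _).trans (by simp)
      rw [Finset.card_univ] at h1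
      omega
    obtain ⟨u, hu1, hu2⟩ := this
    exact ⟨⟨u, hu1, hu2⟩⟩
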